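/- Let F and G be nonzero orthogonal projections on a finite-dimensional complex Hilbert space. Then the trace distance between the normalized projectors satisfies ½‖G/rank(G) − F/rank(F)‖₁ ≤ (‖G − F‖₁ + |rank(G) − rank(F)|) / (2 max(rank(G), rank(F))). -/

import Mathlib

open scoped ComplexOrder

noncomputable section

/-- The trace norm of a complex square matrix: the sum of its singular values,
equal to the trace of `√(Xᴴ X)`. -/
def traceNorm {n : Type*} [Fintype n] [DecidableEq n] (X : Matrix n n ℂ) : ℝ :=
  (((Matrix.posSemidef_conjTranspose_mul_self X).1.eigenvectorUnitary : Matrix n n ℂ) *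
    Matrix.diagonal ((fun x : ℝ => (x : ℂ)) ∘ (fun x : ℝ => Real.sqrt x) ∘ (Matrix.posSemidef_conjTranspose_mul_self X).1.eigenvalues) *
    (star ((Matrix.posSemidef_conjTranspose_mul_self X).1.eigenvectorUnitary : Matrix n n ℂ))).trace.re

/-- The operator norm (largest singular value) of a complex square matrix. -/
def opNorm {n : Type*} [Fintype n] [DecidableEq n] (X : Matrix n n ℂ) : ℝ :=
  ‖Matrix.toEuclideanCLM (𝕜 := ℂ) X‖

namespace TNAux

open Matrix

variable {n : Type*} [Fintype n] [DecidableEq n]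

lemma conj_diag_mul (U : Matrix.unitaryGroup n ℂ) (d e : n → ℂ) :
    (U.1 * diagonal d * star U.1) * (U.1 * diagonal e * star U.1)
      = U.1 * diagonal (d * e) * star U.1 := by
  have h : (star U.1) * U.1 = 1 := Unitary.coe_star_mul_self U
  calc (U.1 * diagonal d * star U.1) * (U.1 * diagonal e * star U.1)
      = U.1 * (diagonal d * ((star U.1) * U.1) * diagonal e) * star U.1 := by
        simp only [Matrix.mul_assoc]
    _ = U.1 * diagonal (d * e) * star U.1 := by
        rw [h, Matrix.mul_one, diagonal_mul_diagonal]
        rfl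

lemma trace_conj_diag (U : Matrix.unitaryGroup n ℂ) (d : n → ℂ) :
    (U.1 * diagonal d * star U.1).trace = ∑ i, d i := by
  have h : (star U.1) * U.1 = 1 := Unitary.coe_star_mul_self U
  rw [Matrix.trace_mul_cycle, h, Matrix.one_mul, trace_diagonal]

lemma spec' {A : Matrix n n ℂ} (hA : A.IsHermitian) :
    A = hA.eigenvectorUnitary.1 * diagonal (RCLike.ofReal ∘ hA.eigenvalues) *
      star hA.eigenvectorUnitary.1 := by
  have h := hA.spectral_theorem
  rw [Unitary.conjStarAlgAut_apply] at h
  exact h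

open scoped MatrixOrder in
lemma traceNorm_eq_of_sq {X B : Matrix n n ℂ} (hB : B.PosSemidef) (hsq : B ^ 2 = Xᴴ * X) :
    traceNorm X = B.trace.re := by
  have hS := posSemidef_conjTranspose_mul_self X
  have h1 : CFC.sqrt (Xᴴ * X) = B := by
    rw [CFC.sqrt_eq_iff _ _ hS.nonneg hB.nonneg, ← sq, hsq]
  rw [← h1, CFC.sqrt_eq_cfc, cfc_nnreal_eq_real _ _ hS.nonneg, hS.1.cfc_eq, IsHermitian.cfc,
    Unitary.conjStarAlgAut_apply]
  have hf : (fun x : ℝ => ((NNReal.sqrt x.toNNReal : ℝ))) = fun x => Real.sqrt x := by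
    funext x; rw [Real.sqrt.eq_1]
  rw [hf]
  rfl

/-- traceNorm of a Hermitian matrix is the sum of absolute values of eigenvalues. -/
lemma traceNorm_herm {A : Matrix n n ℂ} (hA : A.IsHermitian) :
    traceNorm A = ∑ i, |hA.eigenvalues i| := by
  set U := hA.eigenvectorUnitary with hU
  set lam := hA.eigenvalues with hlam
  have hspec := spec' hA
  set B : Matrix n n ℂ := U.1 * diagonal ((↑) ∘ fun i => |lam i|) * star U.1 with hB
  have hBpsd : B.PosSemidef := by
    refine PosSemidef.mul_mul_conjTranspose_same ?_ _
    refine posSemidef_diagonal_iff.mpr fun i => ?_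
    rw [Function.comp_apply]
    exact_mod_cast Complex.zero_le_real.mpr (abs_nonneg _)
  have hsq : B ^ 2 = Aᴴ * A := by
    rw [pow_two, hB, conj_diag_mul]
    rw [hA.eq]
    conv_rhs => rw [hspec]
    rw [conj_diag_mul]
    have : ((Complex.ofReal ∘ fun i => |lam i|) * (Complex.ofReal ∘ fun i => |lam i|) : n → ℂ)
        = (RCLike.ofReal ∘ hA.eigenvalues) * (RCLike.ofReal ∘ hA.eigenvalues) := by
      funext i
      simp only [Pi.mul_apply, Function.comp_apply, ← Complex.ofReal_mul, abs_mul_abs_self]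
      push_cast
      rfl
    rw [this]
  rw [traceNorm_eq_of_sq hBpsd hsq, hB, trace_conj_diag]
  push_cast
  simp

end TNAux

end

noncomputable section
namespace TNAux
open Matrix
variable {n : Type*} [Fintype n] [DecidableEq n]

lemma isHermitian_real_smul {A : Matrix n n ℂ} (hA : A.IsHermitian) (r : ℝ) :
    ((r : ℂ) • A).IsHermitian := by
  unfold Matrix.IsHermitian
  rw [conjTranspose_smul, hA.eq, Complex.star_def, Complex.conj_ofReal]

lemma posSemidef_real_smul {A : Matrix n n ℂ} (hA : A.PosSemidef) {r : ℝ} (hr : 0 ≤ r) :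
    ((r : ℂ) • A).PosSemidef := by
  exact hA.smul (Complex.zero_le_real.mpr hr)

open scoped MatrixOrder in
lemma traceNorm_smul (c : ℂ) (A : Matrix n n ℂ) :
    traceNorm (c • A) = ‖c‖ * traceNorm A := by
  have hS := posSemidef_conjTranspose_mul_self A
  set B : Matrix n n ℂ := (‖c‖ : ℂ) • CFC.sqrt (Aᴴ * A) with hB
  have hBpsd : B.PosSemidef :=
    posSemidef_real_smul (CFC.sqrt_nonneg (Aᴴ * A)).posSemidef (norm_nonneg c)
  have hsq : B ^ 2 = (c • A)ᴴ * (c • A) := by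
    rw [hB, smul_pow, CFC.sq_sqrt _ hS.nonneg, conjTranspose_smul, smul_mul_assoc, Matrix.mul_smul,
      smul_smul]
    congr 1
    rw [← Complex.ofReal_pow, Complex.sq_norm, Complex.star_def, Complex.normSq_eq_conj_mul_self]
  rw [traceNorm_eq_of_sq hBpsd hsq, hB, trace_smul, smul_eq_mul, Complex.mul_re, Complex.ofReal_re,
    Complex.ofReal_im, traceNorm_eq_of_sq (CFC.sqrt_nonneg (Aᴴ * A)).posSemidef (CFC.sq_sqrt _ hS.nonneg)]
  ring

lemma re_trace_sign_mul_le {A : Matrix n n ℂ} (hA : A.IsHermitian)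
    (W : Matrix.unitaryGroup n ℂ) (s : n → ℝ) (hs : ∀ i, |s i| ≤ 1) :
    ((W.1 * diagonal (Complex.ofReal ∘ s) * star W.1) * A).trace.re ≤ traceNorm A := by
  set V := hA.eigenvectorUnitary with hV
  set lam := hA.eigenvalues with hlam
  set N : Matrix n n ℂ := star W.1 * V.1 with hN
  have hNstar : star N * N = 1 := by
    rw [hN, StarMul.star_mul, star_star]
    calc star V.1 * W.1 * (star W.1 * V.1)
        = star V.1 * (W.1 * star W.1) * V.1 := by simp only [Matrix.mul_assoc]
      _ = 1 := by rw [Matrix.mem_unitaryGroup_iff.mp W.2, Matrix.mul_one,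
            Matrix.mem_unitaryGroup_iff'.mp V.2]
  have hcol : ∀ i, ∑ j, Complex.normSq (N j i) = 1 := by
    intro i
    have h1 : (star N * N) i i = 1 := by rw [hNstar]; simp
    have h2 : (star N * N) i i = ∑ j, (Complex.normSq (N j i) : ℂ) := by
      rw [Matrix.mul_apply]
      refine Finset.sum_congr rfl fun j _ => ?_
      rw [Matrix.star_apply, Complex.star_def, ← Complex.normSq_eq_conj_mul_self]
    have := h2.symm.trans h1
    exact_mod_cast this
  set M : Matrix n n ℂ := star N * diagonal (Complex.ofReal ∘ s) * N with hM
  have hMre : ∀ i, (M i i).re = ∑ j, s j * Complex.normSq (N j i) := by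
    intro i
    have hMiieq : M i i = ∑ j, ((s j : ℂ) * (Complex.normSq (N j i) : ℂ)) := by
      rw [hM, Matrix.mul_assoc, Matrix.mul_apply]
      refine Finset.sum_congr rfl fun j _ => ?_
      rw [Matrix.diagonal_mul, Matrix.star_apply, Complex.star_def]
      have h3 : (starRingEnd ℂ) (N j i) * ((Complex.ofReal ∘ s) j * N j i)
          = ((Complex.ofReal ∘ s) j) * ((starRingEnd ℂ) (N j i) * N j i) := by ring
      rw [h3, ← Complex.normSq_eq_conj_mul_self]
      rfl
    rw [hMiieq, Complex.re_sum]
    refine Finset.sum_congr rfl fun j _ => ?_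
    rw [← Complex.ofReal_mul, Complex.ofReal_re]
  have hMbound : ∀ i, |(M i i).re| ≤ 1 := by
    intro i
    rw [hMre i]
    calc |∑ j, s j * Complex.normSq (N j i)| ≤ ∑ j, |s j * Complex.normSq (N j i)| :=
          Finset.abs_sum_le_sum_abs _ _
      _ ≤ ∑ j, Complex.normSq (N j i) := by
          refine Finset.sum_le_sum fun j _ => ?_
          rw [abs_mul, abs_of_nonneg (Complex.normSq_nonneg _)]
          exact mul_le_of_le_one_left (Complex.normSq_nonneg _) (hs j)
      _ = 1 := hcol i
  have htr : ((W.1 * diagonal (Complex.ofReal ∘ s) * star W.1) * A).trace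
      = ∑ i, M i i * (lam i : ℂ) := by
    have hMS : M = star V.1 * ((W.1 : Matrix n n ℂ) * diagonal (Complex.ofReal ∘ s) * star W.1)
        * V.1 := by
      rw [hM, hN, StarMul.star_mul, star_star]
      simp only [Matrix.mul_assoc]
    conv_lhs => rw [spec' hA]
    calc ((W.1 * diagonal (Complex.ofReal ∘ s) * star W.1) *
          (V.1 * diagonal (RCLike.ofReal ∘ lam) * star V.1)).trace
        = (((W.1 * diagonal (Complex.ofReal ∘ s) * star W.1) * V.1
            * diagonal (RCLike.ofReal ∘ lam)) * star V.1).trace := by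
          simp only [Matrix.mul_assoc]
      _ = (star V.1 * ((W.1 * diagonal (Complex.ofReal ∘ s) * star W.1) * V.1
            * diagonal (RCLike.ofReal ∘ lam))).trace := Matrix.trace_mul_comm _ _
      _ = ((star V.1 * ((W.1 : Matrix n n ℂ) * diagonal (Complex.ofReal ∘ s) * star W.1) * V.1)
            * diagonal (RCLike.ofReal ∘ lam)).trace := by simp only [Matrix.mul_assoc]
      _ = ∑ i, M i i * (lam i : ℂ) := by
          rw [← hMS, Matrix.trace]
          refine Finset.sum_congr rfl fun i _ => ?_
          rw [Matrix.diag_apply, Matrix.mul_diagonal]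
          rfl
  rw [traceNorm_herm hA, htr, Complex.re_sum]
  refine Finset.sum_le_sum fun i _ => ?_
  have h5 : (M i i * (lam i : ℂ)).re = (M i i).re * lam i := by
    rw [Complex.mul_re, Complex.ofReal_re, Complex.ofReal_im, mul_zero, sub_zero]
  rw [h5]
  calc (M i i).re * lam i ≤ |(M i i).re * lam i| := le_abs_self _
    _ = |(M i i).re| * |lam i| := abs_mul _ _
    _ ≤ 1 * |lam i| := mul_le_mul_of_nonneg_right (hMbound i) (abs_nonneg _)
    _ = |lam i| := one_mul _


lemma traceNorm_neg (X : Matrix n n ℂ) : traceNorm (-X) = traceNorm X := by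
  have : (-X) = (-1 : ℂ) • X := by simp
  rw [this, traceNorm_smul]
  simp

lemma traceNorm_add_le {A B : Matrix n n ℂ} (hA : A.IsHermitian) (hB : B.IsHermitian) :
    traceNorm (A + B) ≤ traceNorm A + traceNorm B := by
  have hC : (A + B).IsHermitian := hA.add hB
  set W := hC.eigenvectorUnitary with hW
  set mu := hC.eigenvalues with hmu
  set s : n → ℝ := fun i => if mu i < 0 then -1 else 1 with hsdef
  have hs : ∀ i, |s i| ≤ 1 := by
    intro i
    by_cases h : mu i < 0 <;> simp [hsdef, h]
  have h1 : ((W.1 * diagonal (Complex.ofReal ∘ s) * star W.1) * (A + B)).trace.re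
      = traceNorm (A + B) := by
    have e : (W.1 * diagonal (Complex.ofReal ∘ s) * star W.1) * (A + B)
        = W.1 * diagonal ((Complex.ofReal ∘ s) * (RCLike.ofReal ∘ mu)) * star W.1 := by
      conv_lhs => rw [spec' hC]
      exact conj_diag_mul W _ _
    rw [e, trace_conj_diag, traceNorm_herm hC, Complex.re_sum]
    refine Finset.sum_congr rfl fun i _ => ?_
    simp only [Pi.mul_apply, Function.comp_apply]
    rw [show (RCLike.ofReal (mu i) : ℂ) = ((mu i : ℝ) : ℂ) from rfl,
      ← Complex.ofReal_mul, Complex.ofReal_re]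
    by_cases h : mu i < 0
    · rw [hsdef]
      simp only [if_pos h]
      rw [abs_of_neg h]
      ring
    · rw [hsdef]
      simp only [if_neg h]
      rw [abs_of_nonneg (not_lt.mp h)]
      ring
  calc traceNorm (A + B)
      = ((W.1 * diagonal (Complex.ofReal ∘ s) * star W.1) * (A + B)).trace.re := h1.symm
    _ = ((W.1 * diagonal (Complex.ofReal ∘ s) * star W.1) * A).trace.re
        + ((W.1 * diagonal (Complex.ofReal ∘ s) * star W.1) * B).trace.re := by
        rw [Matrix.mul_add, trace_add, Complex.add_re]
    _ ≤ traceNorm A + traceNorm B :=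
        add_le_add (re_trace_sign_mul_le hA W s hs) (re_trace_sign_mul_le hB W s hs)

lemma traceNorm_proj {F : Matrix n n ℂ} (hF : F.IsHermitian) (hF2 : F * F = F) :
    traceNorm F = F.rank := by
  have key : ∀ i, hF.eigenvalues i = 0 ∨ hF.eigenvalues i = 1 := by
    intro i
    have hd : star hF.eigenvectorUnitary.1 * F * hF.eigenvectorUnitary.1
        = diagonal (RCLike.ofReal ∘ hF.eigenvalues) := by
      have h := Unitary.coe_star_mul_self hF.eigenvectorUnitary
      have e : star hF.eigenvectorUnitary.1 * (hF.eigenvectorUnitary.1 *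
          diagonal (RCLike.ofReal ∘ hF.eigenvalues) * star hF.eigenvectorUnitary.1) *
          hF.eigenvectorUnitary.1 = diagonal (RCLike.ofReal ∘ hF.eigenvalues) := by
        simp only [Matrix.mul_assoc]
        rw [h, Matrix.mul_one, ← Matrix.mul_assoc, h, Matrix.one_mul]
      rwa [← spec' hF] at e
    have hsq : (diagonal (RCLike.ofReal ∘ hF.eigenvalues) : Matrix n n ℂ) *
        (diagonal (RCLike.ofReal ∘ hF.eigenvalues) : Matrix n n ℂ)
        = (diagonal (RCLike.ofReal ∘ hF.eigenvalues) : Matrix n n ℂ) := by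
      rw [← hd]
      calc (star hF.eigenvectorUnitary.1 * F * hF.eigenvectorUnitary.1) *
            (star hF.eigenvectorUnitary.1 * F * hF.eigenvectorUnitary.1)
          = star hF.eigenvectorUnitary.1 *
              (F * (hF.eigenvectorUnitary.1 * star hF.eigenvectorUnitary.1) * F) *
              hF.eigenvectorUnitary.1 := by
            simp only [Matrix.mul_assoc]
        _ = star hF.eigenvectorUnitary.1 * F * hF.eigenvectorUnitary.1 := by
            rw [Matrix.mem_unitaryGroup_iff.mp hF.eigenvectorUnitary.2, Matrix.mul_one, hF2]
    rw [diagonal_mul_diagonal] at hsq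
    have h4 : ((hF.eigenvalues i : ℂ)) * ((hF.eigenvalues i : ℂ)) = ((hF.eigenvalues i : ℂ)) := by
      have h7 := congrArg (fun M => M i i) hsq
      simpa using h7
    have h5 : hF.eigenvalues i * hF.eigenvalues i = hF.eigenvalues i := by exact_mod_cast h4
    have h6 : hF.eigenvalues i * (hF.eigenvalues i - 1) = 0 := by
      rw [mul_sub, mul_one, h5, sub_self]
    rcases mul_eq_zero.mp h6 with h | h
    · exact Or.inl h
    · exact Or.inr (by linarith [sub_eq_zero.mp h])
  rw [traceNorm_herm hF, hF.rank_eq_card_non_zero_eigs, Fintype.card_subtype, Finset.card_filter]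
  push_cast
  refine Finset.sum_congr rfl fun i _ => ?_
  rcases key i with h | h <;> simp [h]

lemma rank_pos_of_ne_zero {F : Matrix n n ℂ} (hF : F.IsHermitian) (hne : F ≠ 0) : 0 < F.rank := by
  rw [hF.rank_eq_card_non_zero_eigs]
  have hev : hF.eigenvalues ≠ 0 := by
    intro h0
    apply hne
    have hsp := spec' hF
    rwa [h0, Pi.comp_zero, RCLike.ofReal_zero,
      (by rfl : Function.const n (0 : ℂ) = fun _ => 0), diagonal_zero, Matrix.mul_zero,
      Matrix.zero_mul] at hsp
  obtain ⟨i, hi⟩ := Function.ne_iff.mp hev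
  exact Fintype.card_pos_iff.mpr ⟨⟨i, hi⟩⟩

end TNAux
end

noncomputable section
namespace TNAux
open Matrix
variable {n : Type*} [Fintype n] [DecidableEq n]

lemma main_aux {F G : Matrix n n ℂ}
    (hF : F.IsHermitian) (hG : G.IsHermitian)
    (hF2 : F * F = F) (hG2 : G * G = G)
    (hFne : F ≠ 0) (hGne : G ≠ 0) (hle : F.rank ≤ G.rank) :
    (1 / 2) * traceNorm (((G.rank : ℂ))⁻¹ • G - ((F.rank : ℂ))⁻¹ • F) ≤
      (traceNorm (G - F) + |(G.rank : ℝ) - (F.rank : ℝ)|) /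
        (2 * max G.rank F.rank) := by
  set r : ℝ := (F.rank : ℝ) with hr
  set t : ℝ := (G.rank : ℝ) with ht
  have hrpos : 0 < r := by
    rw [hr]; exact_mod_cast rank_pos_of_ne_zero hF hFne
  have htpos : 0 < t := by
    rw [ht]; exact_mod_cast rank_pos_of_ne_zero hG hGne
  have hrt : r ≤ t := by rw [hr, ht]; exact_mod_cast hle
  have hcast1 : ((G.rank : ℂ))⁻¹ = ((t⁻¹ : ℝ) : ℂ) := by
    rw [ht]; push_cast; ring
  have hcast2 : ((F.rank : ℂ))⁻¹ = ((r⁻¹ : ℝ) : ℂ) := by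
    rw [hr]; push_cast; ring
  have hdecomp : ((G.rank : ℂ))⁻¹ • G - ((F.rank : ℂ))⁻¹ • F
      = ((t⁻¹ : ℝ) : ℂ) • (G - F) + (((t⁻¹ - r⁻¹ : ℝ)) : ℂ) • F := by
    rw [hcast1, hcast2, Complex.ofReal_sub, smul_sub, sub_smul]
    abel
  have tri := traceNorm_add_le (isHermitian_real_smul (hG.sub hF) t⁻¹)
    (isHermitian_real_smul hF (t⁻¹ - r⁻¹))
  rw [← hdecomp] at tri
  have e1 : traceNorm (((t⁻¹ : ℝ) : ℂ) • (G - F)) = t⁻¹ * traceNorm (G - F) := by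
    rw [traceNorm_smul, Complex.norm_real, Real.norm_eq_abs, abs_of_nonneg (inv_nonneg.mpr htpos.le)]
  have e2 : traceNorm ((((t⁻¹ - r⁻¹ : ℝ)) : ℂ) • F) = (r⁻¹ - t⁻¹) * r := by
    rw [traceNorm_smul, Complex.norm_real, Real.norm_eq_abs, traceNorm_proj hF hF2,
      abs_of_nonpos (sub_nonpos.mpr (inv_anti₀ hrpos hrt)), neg_sub, hr]
  rw [e1, e2] at tri
  have hmax : ((max G.rank F.rank : ℕ) : ℝ) = t := by
    rw [max_eq_left hle, ht]
  have habs : |t - r| = t - r := abs_of_nonneg (sub_nonneg.mpr hrt)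
  rw [habs, hmax]
  calc (1 / 2) * traceNorm (((G.rank : ℂ))⁻¹ • G - ((F.rank : ℂ))⁻¹ • F)
      ≤ (1 / 2) * (t⁻¹ * traceNorm (G - F) + (r⁻¹ - t⁻¹) * r) := by
        apply mul_le_mul_of_nonneg_left tri (by norm_num)
    _ = (traceNorm (G - F) + (t - r)) / (2 * t) := by
        field_simp

end TNAux

/-- the trace distance between two normalized projectors. -/
theorem traceNorm_normalized_proj {n : Type*} [Fintype n] [DecidableEq n]
    (F G : Matrix n n ℂ)
    (hF : F.IsHermitian) (hG : G.IsHermitian)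
    (hF2 : F * F = F) (hG2 : G * G = G)
    (hFne : F ≠ 0) (hGne : G ≠ 0) :
    (1 / 2) * traceNorm (((G.rank : ℂ))⁻¹ • G - ((F.rank : ℂ))⁻¹ • F) ≤
      (traceNorm (G - F) + |(G.rank : ℝ) - (F.rank : ℝ)|) /
        (2 * max G.rank F.rank) := by

  rcases le_total F.rank G.rank with hle | hle
  · exact TNAux.main_aux hF hG hF2 hG2 hFne hGne hle
  · have h := TNAux.main_aux hG hF hG2 hF2 hGne hFne hle
    have e1 := TNAux.traceNorm_neg (((G.rank : ℂ))⁻¹ • G - ((F.rank : ℂ))⁻¹ • F)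
    rw [neg_sub] at e1
    have e2 := TNAux.traceNorm_neg (G - F)
    rw [neg_sub] at e2
    rw [e1, e2, abs_sub_comm, max_comm] at h
    exact h

end
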